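/- Let E, V, P be real inner product spaces, R : V →ₗ[ℝ] E and D : E →ₗ[ℝ] P linear maps with D ∘ R = 0, T : E →ₗ[ℝ] V a linear map with ‖T B‖_V ≤ c‖B‖_E for all B ∈ E (c ≥ 0). Fix θ with 0 < θ ≤ 1 and τ > 0. For ξ = (B,e) ∈ E × V set η_ξ = ((θ/2)•(B + τ • R e), e). Then with a₀ and ‖·‖_{X,τ} as in Problem C, a₀(ξ, η_ξ) ≥ (θ/2)·(1 - c√τ)·‖ξ‖_{X,τ}². -/

import Mathlib

open RealInnerProductSpace

/-- Coercivity of the bilinear form a₀ of Problem C on the pair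
η_ξ = ((θ/2)•(B + τ•R e), e): a₀(ξ, η_ξ) ≥ (θ/2)(1 - c√τ)‖ξ‖²_{X,τ}. -/
theorem a0_coercive_on_test_pair
    {E V P : Type*}
    [NormedAddCommGroup E] [InnerProductSpace ℝ E]
    [NormedAddCommGroup V] [InnerProductSpace ℝ V]
    [NormedAddCommGroup P] [InnerProductSpace ℝ P]
    (R : V →ₗ[ℝ] E) (D : E →ₗ[ℝ] P) (hDR : D ∘ₗ R = 0)
    (T : E →ₗ[ℝ] V) (c : ℝ) (hc : 0 ≤ c)
    (hT : ∀ B : E, ‖T B‖ ≤ c * ‖B‖)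
    (θ : ℝ) (hθ0 : 0 < θ) (hθ1 : θ ≤ 1)
    (τ : ℝ) (hτ : 0 < τ)
    (B : E) (e : V) :
    -- a₀(ξ, η_ξ) with ξ = (B, e) and η_ξ = ((θ/2)•(B + τ•R e), e)
    τ⁻¹ * ⟪B, (θ / 2) • (B + τ • R e)⟫ + ⟪R e, (θ / 2) • (B + τ • R e)⟫
      + ⟪e, e⟫ + θ * ⟪T B, e⟫ - θ * ⟪B, R e⟫
      + ⟪D B, D ((θ / 2) • (B + τ • R e))⟫
    ≥ (θ / 2) * (1 - c * Real.sqrt τ) *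
        (‖e‖ ^ 2 + τ * ‖R e‖ ^ 2 + τ⁻¹ * ‖B‖ ^ 2 + ‖D B‖ ^ 2) := by
  have hDRe : D (R e) = 0 := by
    have h := LinearMap.ext_iff.mp hDR e
    simpa using h
  have h1 : ⟪B, (θ / 2) • (B + τ • R e)⟫
      = (θ / 2) * (‖B‖ ^ 2 + τ * ⟪B, R e⟫) := by
    rw [real_inner_smul_right, inner_add_right, real_inner_smul_right,
      real_inner_self_eq_norm_sq]
  have h2 : ⟪R e, (θ / 2) • (B + τ • R e)⟫
      = (θ / 2) * (⟪B, R e⟫ + τ * ‖R e‖ ^ 2) := by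
    rw [real_inner_smul_right, inner_add_right, real_inner_smul_right,
      real_inner_self_eq_norm_sq, real_inner_comm]
  have h3 : ⟪D B, D ((θ / 2) • (B + τ • R e))⟫ = (θ / 2) * ‖D B‖ ^ 2 := by
    rw [map_smul, map_add, map_smul, hDRe, smul_zero, add_zero,
      real_inner_smul_right, real_inner_self_eq_norm_sq]
  have h4 : ⟪e, e⟫ = ‖e‖ ^ 2 := real_inner_self_eq_norm_sq e
  set s := Real.sqrt τ with hs_def
  have hs : 0 < s := Real.sqrt_pos.mpr hτ
  have hs2 : s ^ 2 = τ := Real.sq_sqrt hτ.le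
  set b := ‖B‖ / s with hb_def
  have hxb : ‖B‖ = s * b := by rw [hb_def]; field_simp [hs.ne']
  have hub : τ⁻¹ * ‖B‖ ^ 2 = b ^ 2 := by
    rw [hxb, ← hs2]
    field_simp
  have hτinv : τ⁻¹ * τ = 1 := inv_mul_cancel₀ hτ.ne'
  have expand : τ⁻¹ * ((θ / 2) * (‖B‖ ^ 2 + τ * ⟪B, R e⟫))
      = (θ / 2) * b ^ 2 + (θ / 2) * ⟪B, R e⟫ := by
    linear_combination (θ / 2) * hub + (θ / 2) * ⟪B, R e⟫ * hτinv
  -- Cauchy–Schwarz bound on the transport term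
  have hTB : ⟪T B, e⟫ ≥ -(c * (s * b) * ‖e‖) := by
    have hcs := abs_real_inner_le_norm (T B) e
    have h' : ‖T B‖ * ‖e‖ ≤ c * ‖B‖ * ‖e‖ :=
      mul_le_mul_of_nonneg_right (hT B) (norm_nonneg e)
    have h'' := neg_abs_le (⟪T B, e⟫)
    rw [hxb] at h'
    linarith
  rw [h1, h2, h3, h4, expand, hub, ← hs2]
  nlinarith [mul_nonneg (mul_nonneg (mul_nonneg hθ0.le hc) hs.le)
      (sq_nonneg (s * ‖R e‖)),
    mul_nonneg (mul_nonneg (mul_nonneg hθ0.le hc) hs.le) (sq_nonneg (‖D B‖)),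
    mul_nonneg (mul_nonneg (mul_nonneg hθ0.le hc) hs.le) (sq_nonneg (b - ‖e‖)),
    mul_nonneg (sub_nonneg.mpr hθ1) (sq_nonneg (‖e‖)),
    mul_le_mul_of_nonneg_left hTB hθ0.le]
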